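/- Let $\tau = b+ia$ with $a > 0$, $d$ a positive integer, and for $k \in \mathbb{Z}$ define $\vartheta_{d,k}(z) = \sum_{n \in \mathbb{Z}} e^{\pi i \tau d (n + k/d)^2} e^{2\pi i d (n + k/d) z}$. Then $\vartheta_{d,k+d}(z) = \vartheta_{d,k}(z)$ for all $z$, and the functions $\vartheta_{d,0}, \dots, \vartheta_{d,d-1}$ are linearly independent over $\mathbb{C}$ as functions on $\mathbb{C}$. -/

import Mathlib

/-- The degree-`d` theta basis function
`ϑ_{d,k}(z) = ∑ₙ e^{πiτd(n+k/d)²} e^{2πid(n+k/d)z}`. -/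
noncomputable def thetaBasis (τ : ℂ) (d : ℕ) (k : ℤ) (z : ℂ) : ℂ :=
  ∑' n : ℤ, Complex.exp (Real.pi * Complex.I * τ * (d : ℂ) *
      ((n : ℂ) + (k : ℂ) / (d : ℂ)) ^ 2) *
    Complex.exp (2 * Real.pi * Complex.I * (d : ℂ) *
      ((n : ℂ) + (k : ℂ) / (d : ℂ)) * z)

open Complex Real MeasureTheory Set

/-- `thetaBasis` in terms of the two-variable Jacobi theta function. -/
lemma thetaBasis_eq (τ : ℂ) {d : ℕ} (hd : (d:ℂ) ≠ 0) (k : ℤ) (z : ℂ) :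
    thetaBasis τ d k z = Complex.exp (Real.pi * Complex.I * τ * (k:ℂ)^2 / (d:ℂ)
        + 2 * Real.pi * Complex.I * (k:ℂ) * z) *
      jacobiTheta₂ ((d:ℂ) * z + (k:ℂ) * τ) ((d:ℂ) * τ) := by
  rw [jacobiTheta₂, ← tsum_mul_left]
  refine tsum_congr fun n => ?_
  rw [jacobiTheta₂_term, ← Complex.exp_add, ← Complex.exp_add]
  congr 1
  field_simp
  ring

/-- The Jacobi theta function (for a fixed `τ` in the upper half-plane) is not identically
zero on the real axis, since its mean value over a period is `1`. -/
lemma jacobiTheta₂_exists_ne_zero {σ : ℂ} (hσ : 0 < σ.im) :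
    ∃ x : ℝ, jacobiTheta₂ (x:ℂ) σ ≠ 0 := by
  by_contra h
  push_neg at h
  have hint : ∫ x in Ioc (0:ℝ) 1, jacobiTheta₂ (x:ℂ) σ = 0 := by
    simp [h]
  have hcont : ∀ n : ℤ, Continuous fun x : ℝ => jacobiTheta₂_term n (x:ℂ) σ := by
    intro n
    unfold jacobiTheta₂_term
    fun_prop
  have hnorm : ∀ (n : ℤ) (x : ℝ), ‖jacobiTheta₂_term n (x:ℂ) σ‖
      = Real.exp (-Real.pi * n ^ 2 * σ.im) := by
    intro n x
    rw [norm_jacobiTheta₂_term]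
    simp
  have hsum : Summable fun n : ℤ => Real.exp (-Real.pi * n ^ 2 * σ.im) := by
    have h0 := (summable_jacobiTheta₂_term_iff 0 σ).mpr hσ
    have h2 : Summable fun n : ℤ => ‖jacobiTheta₂_term n 0 σ‖ := summable_norm_iff.mpr h0
    exact h2.congr fun n => by rw [norm_jacobiTheta₂_term]; simp
  have key : ∫ x in Ioc (0:ℝ) 1, jacobiTheta₂ (x:ℂ) σ
      = ∑' n : ℤ, ∫ x in Ioc (0:ℝ) 1, jacobiTheta₂_term n (x:ℂ) σ := by
    unfold jacobiTheta₂
    rw [← MeasureTheory.integral_tsum_of_summable_integral_norm]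
    · intro n
      exact (hcont n).integrableOn_Ioc
    · simp_rw [hnorm]
      simpa [Real.volume_Ioc] using hsum
  have hterm : ∀ n : ℤ, n ≠ 0 → (∫ x in Ioc (0:ℝ) 1, jacobiTheta₂_term n (x:ℂ) σ) = 0 := by
    intro n hn
    have : ∀ x : ℝ, jacobiTheta₂_term n (x:ℂ) σ
        = Complex.exp ((2 * Real.pi * Complex.I * n) * (x:ℂ)) *
          Complex.exp (Real.pi * Complex.I * n^2 * σ) := by
      intro x
      rw [jacobiTheta₂_term, Complex.exp_add]
    simp_rw [this]
    rw [MeasureTheory.integral_mul_const]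
    have hc : (2 * (Real.pi:ℂ) * Complex.I * n) ≠ 0 := by
      simp [Real.pi_ne_zero, Complex.I_ne_zero, hn]
    rw [← intervalIntegral.integral_of_le (zero_le_one)]
    rw [integral_exp_mul_complex hc]
    simp only [Complex.ofReal_one, Complex.ofReal_zero, mul_one, mul_zero, Complex.exp_zero]
    rw [show (2 * (Real.pi:ℂ) * Complex.I * (n:ℂ)) = (n:ℂ) * (2 * Real.pi * Complex.I) from by
      ring, Complex.exp_int_mul_two_pi_mul_I, sub_self, zero_div, zero_mul]
  have hval : ∫ x in Ioc (0:ℝ) 1, jacobiTheta₂ (x:ℂ) σ = 1 := by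
    rw [key, tsum_eq_single 0 (fun n hn => hterm n hn)]
    simp [jacobiTheta₂_term, Real.volume_Ioc]
  rw [hint] at hval
  exact zero_ne_one hval

/-- `ϑ_{d,k+d} = ϑ_{d,k}`, and `ϑ_{d,0}, …, ϑ_{d,d-1}` are linearly
independent over `ℂ` as functions on `ℂ`. -/
theorem thetaBasis_periodic_and_linearIndependent
    (a b : ℝ) (ha : 0 < a) (τ : ℂ) (hτ : τ = (b : ℂ) + (a : ℂ) * Complex.I)
    (d : ℕ) (hd : 0 < d) :
    (∀ (k : ℤ) (z : ℂ), thetaBasis τ d (k + d) z = thetaBasis τ d k z) ∧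
    LinearIndependent ℂ (fun k : Fin d => thetaBasis τ d (k : ℤ)) := by
  have hdC : (d:ℂ) ≠ 0 := Nat.cast_ne_zero.mpr hd.ne'
  have hτim : τ.im = a := by rw [hτ]; simp
  have him : 0 < ((d:ℂ) * τ).im := by
    rw [Complex.mul_im]
    simp only [Complex.natCast_re, Complex.natCast_im, zero_mul, add_zero]
    rw [hτim]
    positivity
  -- Periodicity
  have hper : ∀ (k : ℤ) (z : ℂ), thetaBasis τ d (k + d) z = thetaBasis τ d k z := by
    intro k z
    rw [thetaBasis_eq τ hdC (k + d) z, thetaBasis_eq τ hdC k z]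
    have harg : ((d:ℂ) * z + ((k + (d:ℤ) : ℤ):ℂ) * τ) = ((d:ℂ) * z + (k:ℂ) * τ) + (d:ℂ) * τ := by
      push_cast; ring
    rw [harg, jacobiTheta₂_add_left', ← mul_assoc, ← Complex.exp_add]
    congr 2
    push_cast
    field_simp
    ring
  refine ⟨hper, ?_⟩
  -- Linear independence via eigenvectors of translation by `1/d`
  set T : Module.End ℂ (ℂ → ℂ) :=
    { toFun := fun f => fun z => f (z + 1/(d:ℂ))
      map_add' := fun f g => rfl
      map_smul' := fun c f => rfl } with hT
  have hprim : IsPrimitiveRoot (Complex.exp (2 * Real.pi * Complex.I / d)) d :=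
    Complex.isPrimitiveRoot_exp d hd.ne'
  set μ : Fin d → ℂ := fun k => Complex.exp (2 * Real.pi * Complex.I / d) ^ (k:ℕ) with hμ
  have hinj : Function.Injective μ := fun j k h => Fin.ext (hprim.pow_inj j.2 k.2 h)
  -- quasi-periodicity: ϑ_{d,k}(z + 1/d) = e^{2πik/d} ϑ_{d,k}(z)
  have hquasi : ∀ (k : ℤ) (z : ℂ), thetaBasis τ d k (z + 1/(d:ℂ))
      = Complex.exp (2 * Real.pi * Complex.I * (k:ℂ) / (d:ℂ)) * thetaBasis τ d k z := by
    intro k z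
    rw [thetaBasis_eq τ hdC k (z + 1/(d:ℂ)), thetaBasis_eq τ hdC k z]
    have harg : ((d:ℂ) * (z + 1/(d:ℂ)) + (k:ℂ) * τ) = ((d:ℂ) * z + (k:ℂ) * τ) + 1 := by
      field_simp
      ring
    rw [harg, jacobiTheta₂_add_left, ← mul_assoc, ← Complex.exp_add]
    congr 2
    field_simp
    ring
  have heig : ∀ k : Fin d,
      T.HasEigenvector (μ k) (thetaBasis τ d (k : ℤ)) := by
    intro k
    rw [Module.End.hasEigenvector_iff]
    constructor
    · rw [Module.End.mem_eigenspace_iff]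
      funext z
      show thetaBasis τ d (k:ℤ) (z + 1/(d:ℂ)) = _
      rw [hquasi (k:ℤ) z]
      rw [Pi.smul_apply, smul_eq_mul]
      congr 1
      simp only [hμ]
      rw [← Complex.exp_nat_mul]
      congr 1
      push_cast
      ring
    · -- nonvanishing
      obtain ⟨x, hx⟩ := jacobiTheta₂_exists_ne_zero him
      intro h0
      set z : ℂ := ((x:ℂ) - (k:ℤ) * τ) / d with hz
      have harg : ((d:ℂ) * z + ((k:ℤ):ℂ) * τ) = (x:ℂ) := by
        rw [hz]; field_simp; ring
      have := thetaBasis_eq τ hdC (k:ℤ) z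
      rw [harg] at this
      have hzero : thetaBasis τ d (k:ℤ) z = 0 := by rw [h0]; rfl
      rw [hzero] at this
      exact hx (by
        rcases mul_eq_zero.mp this.symm with h | h
        · exact absurd h (Complex.exp_ne_zero _)
        · exact h)
  exact T.eigenvectors_linearIndependent' μ hinj _ heig
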